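/- Let G = (A, B, E) be a finite bipartite graph in which every vertex has degree at most d, let 0 < p ≤ 1 with p·d ≥ 2, and let G_p be the random subgraph of G obtained by keeping each edge independently with probability p. Fix an edge (u,v) ∈ E and an integer k ≥ 4. Then, conditioned on the event that (u,v) is an edge of G_p, the probability that (u,v) lies on a simple cycle of length at most k in G_p is at most 2(p·d)^{k−1}/d. -/

import Mathlib

open MeasureTheory

/-- The product Bernoulli(p) measure on subsets of a finite index type `ι`. -/
noncomputable def bernoulliProd (ι : Type) [Fintype ι] (p : ℝ) :
    Measure (ι → Bool) :=
  Measure.pi fun _ => (PMF.bernoulli (min (Real.toNNReal p) 1) (min_le_right _ _)).toMeasure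

/-- The random subgraph of `G` determined by a keep-function `ω` on (potential) edges. -/
def keepG {V : Type} (G : SimpleGraph V) (ω : Sym2 V → Bool) : SimpleGraph V where
  Adj x y := G.Adj x y ∧ ω s(x, y)
  symm := ⟨fun x y ⟨h, hb⟩ => ⟨h.symm, by rwa [Sym2.eq_swap]⟩⟩
  loopless := ⟨fun x ⟨h, _⟩ => G.loopless.irrefl x h⟩

section Auxiliary

open SimpleGraph Finset

lemma bernoulliProd_cylinder {ι : Type} [Fintype ι] [DecidableEq ι] {p : ℝ} (hp1 : p ≤ 1)
    (S : Finset ι) :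
    bernoulliProd ι p {ω | ∀ e ∈ S, ω e = true} = (ENNReal.ofReal p) ^ S.card := by
  have hmin : min (Real.toNNReal p) 1 = Real.toNNReal p :=
    min_eq_left (Real.toNNReal_le_one.mpr hp1)
  have hset : {ω : ι → Bool | ∀ e ∈ S, ω e = true}
      = Set.pi Set.univ (fun e => if e ∈ S then {true} else Set.univ) := by
    ext ω
    simp only [Set.mem_setOf_eq, Set.mem_pi, Set.mem_univ, forall_true_left]
    refine forall_congr' fun e => ?_
    by_cases he : e ∈ S <;> simp [he]
  rw [hset, bernoulliProd, Measure.pi_pi]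
  have hone : ∀ e : ι,
      (PMF.bernoulli (min (Real.toNNReal p) 1) (min_le_right _ _)).toMeasure
        (if e ∈ S then {true} else Set.univ)
      = if e ∈ S then ENNReal.ofReal p else 1 := by
    intro e
    by_cases he : e ∈ S <;> simp only [he, if_true, if_false]
    · rw [PMF.toMeasure_apply_singleton _ _ (measurableSet_singleton _),
        PMF.bernoulli_apply, hmin]; rfl
    · exact measure_univ
  simp only [hone]
  rw [Finset.prod_ite, Finset.prod_const, Finset.prod_const, one_pow, mul_one]
  congr 1
  rw [Finset.filter_univ_mem]

variable {V : Type}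

lemma rowsum_le [Fintype V] [DecidableEq V] {G : SimpleGraph V} [DecidableRel G.Adj] {d : ℕ}
    (hdeg : ∀ w : V, G.degree w ≤ d) :
    ∀ (n : ℕ) (x : V), (∑ y, (G.adjMatrix ℕ ^ n) x y) ≤ d ^ n := by
  intro n
  induction n with
  | zero =>
    intro x
    simp [Matrix.one_apply, Finset.sum_ite_eq]
  | succ n ih =>
    intro x
    have key : ∀ y, (G.adjMatrix ℕ ^ (n+1)) x y
        = ∑ z ∈ G.neighborFinset x, (G.adjMatrix ℕ ^ n) z y := by
      intro y
      rw [pow_succ']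
      exact SimpleGraph.adjMatrix_mul_apply G (G.adjMatrix ℕ ^ n) x y
    calc (∑ y, (G.adjMatrix ℕ ^ (n+1)) x y)
        = ∑ y, ∑ z ∈ G.neighborFinset x, (G.adjMatrix ℕ ^ n) z y := by simp only [key]
      _ = ∑ z ∈ G.neighborFinset x, ∑ y, (G.adjMatrix ℕ ^ n) z y := Finset.sum_comm
      _ ≤ ∑ _z ∈ G.neighborFinset x, d ^ n := Finset.sum_le_sum fun z _ => ih z
      _ = G.degree x * d ^ n := by
          rw [Finset.sum_const, card_neighborFinset_eq_degree, smul_eq_mul]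
      _ ≤ d * d ^ n := Nat.mul_le_mul_right _ (hdeg x)
      _ = d ^ (n+1) := (pow_succ' d n).symm

lemma card_walk_le [Fintype V] [DecidableEq V] {G : SimpleGraph V} [DecidableRel G.Adj] {d : ℕ}
    (hdeg : ∀ w : V, G.degree w ≤ d) (n : ℕ) (x y : V) :
    Fintype.card {q : G.Walk x y // q.length = n + 1} ≤ d ^ n := by
  have h1 : ((G.adjMatrix ℕ ^ (n+1)) x y : ℕ)
      = Fintype.card {q : G.Walk x y | q.length = n + 1} := by
    exact_mod_cast SimpleGraph.adjMatrix_pow_apply_eq_card_walk (n+1) x y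
  have h2 : Fintype.card {q : G.Walk x y // q.length = n + 1}
      = Fintype.card {q : G.Walk x y | q.length = n + 1} := rfl
  rw [h2, ← h1, pow_succ, Matrix.mul_apply]
  calc (∑ z, (G.adjMatrix ℕ ^ n) x z * G.adjMatrix ℕ z y)
      ≤ ∑ z, (G.adjMatrix ℕ ^ n) x z * 1 := by
        refine Finset.sum_le_sum fun z _ => Nat.mul_le_mul_left _ ?_
        by_cases h : G.Adj z y <;> simp [h]
    _ = ∑ z, (G.adjMatrix ℕ ^ n) x z := by simp
    _ ≤ d ^ n := rowsum_le hdeg n x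

variable {G : SimpleGraph V}

lemma path_getVert_one {u w v : V} :
    ∀ (r : G.Walk u w), r.IsPath → s(u, v) ∈ r.edges → r.getVert 1 = v := by
  intro r hr he
  cases r with
  | nil => simp at he
  | @cons _ x _ h r' =>
    rw [Walk.edges_cons, List.mem_cons] at he
    rcases he with he | he
    · have : v = x := Sym2.congr_right.mp he
      simp [Walk.getVert_cons_succ, this]
    · exact absurd (Walk.fst_mem_support_of_mem_edges r' he)
        ((Walk.cons_isPath_iff h r').mp hr).2

lemma cycle_getVert_one {u v : V} (c : G.Walk u u) (hc : c.IsCycle)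
    (he : s(u, v) ∈ c.edges) : c.getVert 1 = v ∨ c.reverse.getVert 1 = v := by
  cases c with
  | nil => simp at he
  | @cons _ x _ h q =>
    have hlen : 2 ≤ q.length := by have := hc.three_le_length; simp at this; omega
    rw [Walk.edges_cons, List.mem_cons] at he
    rcases he with he | he
    · left
      have : v = x := Sym2.congr_right.mp he
      simp [Walk.getVert_cons_succ, this]
    · right
      have hq : q.IsPath := ((Walk.cons_isCycle_iff q h).mp hc).1
      have hrev : q.reverse.getVert 1 = v :=
        path_getVert_one q.reverse hq.reverse
          (by rwa [Walk.edges_reverse, List.mem_reverse])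
      rw [Walk.getVert_reverse] at hrev ⊢
      simp only [Walk.length_cons]
      have h1 : q.length + 1 - 1 = (q.length - 1) + 1 := by omega
      rw [h1, Walk.getVert_cons_succ]
      exact hrev

lemma exists_normalized_cycle [DecidableEq V] {u v : V} {k : ℕ}
    {H : SimpleGraph V} (hle : H ≤ G) {w : V} (c : H.Walk w w) (hc : c.IsCycle)
    (hlen : c.length ≤ k) (he : s(u, v) ∈ c.edges) :
    ∃ c' : G.Walk u u, c'.IsTrail ∧ 3 ≤ c'.length ∧ c'.length ≤ k ∧ c'.getVert 1 = v ∧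
      ∀ e ∈ c'.edges, e ∈ c.edges := by
  let c₁ : G.Walk w w := c.mapLe hle
  have hc₁ : c₁.IsCycle := hc.mapLe hle
  have hedges₁ : c₁.edges = c.edges := by
    simp only [c₁, Walk.mapLe, Walk.edges_map]
    have : Sym2.map ⇑(Hom.ofLE hle) = id := by
      ext e
      induction e with
      | _ a b => simp [Hom.ofLE_apply]
    rw [this, List.map_id]
  have hlen₁ : c₁.length = c.length := Walk.length_map _ _
  have he₁ : s(u, v) ∈ c₁.edges := by rw [hedges₁]; exact he
  have hu : u ∈ c₁.support := Walk.fst_mem_support_of_mem_edges c₁ he₁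
  let c₂ : G.Walk u u := c₁.rotate u hu
  have hc₂ : c₂.IsCycle := hc₁.rotate hu
  have hedges₂ : ∀ e, e ∈ c₂.edges ↔ e ∈ c₁.edges := fun e => (Walk.rotate_edges c₁ u hu).mem_iff
  have hlen₂ : c₂.length = c₁.length := by
    have := (Walk.rotate_edges c₁ u hu).perm.length_eq
    rwa [Walk.length_edges, Walk.length_edges] at this
  have he₂ : s(u, v) ∈ c₂.edges := (hedges₂ _).mpr he₁
  rcases cycle_getVert_one c₂ hc₂ he₂ with hv | hv
  · exact ⟨c₂, hc₂.isCircuit.isTrail, hc₂.three_le_length, by omega, hv,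
      fun e hee => by rw [← hedges₁]; exact (hedges₂ e).mp hee⟩
  · refine ⟨c₂.reverse, hc₂.isCircuit.isTrail.reverse _, ?_, ?_, hv, ?_⟩
    · rw [Walk.length_reverse]; exact hc₂.three_le_length
    · rw [Walk.length_reverse]; omega
    · intro e hee
      rw [Walk.edges_reverse, List.mem_reverse] at hee
      rw [← hedges₁]; exact (hedges₂ e).mp hee

lemma eq_cons_of_getVert_one {u w v : V} {p : G.Walk u w} (hp : ¬p.Nil)
    (hv : p.getVert 1 = v) (h : G.Adj u v) :
    p = Walk.cons h (p.tail.copy hv rfl) := by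
  subst hv
  simp only [Walk.copy_rfl_rfl]
  exact (p.cons_tail_eq hp).symm

lemma card_cycles_le [Fintype V] [DecidableEq V] [DecidableRel G.Adj] {u v : V}
    (huv : G.Adj u v) {k ℓ : ℕ} (hl : 3 ≤ ℓ)
    (s : Finset {c : G.Walk u u // c.length < k + 1})
    (hs : ∀ c ∈ s, c.1.getVert 1 = v ∧ c.1.length = ℓ) :
    s.card ≤ Fintype.card {q : G.Walk v u // q.length = ℓ - 1} := by
  rw [← Fintype.card_coe]
  have hnil : ∀ c : {x // x ∈ s}, ¬ c.1.1.Nil := by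
    intro c
    rw [Walk.not_nil_iff_lt_length]
    have := (hs c.1 c.2).2
    omega
  refine Fintype.card_le_of_injective
    (fun c => ⟨(c.1.1.tail).copy ((hs c.1 c.2).1) rfl, ?_⟩) ?_
  · rw [Walk.length_copy]
    have h1 := Walk.length_tail_add_one (hnil c)
    have h2 := (hs c.1 c.2).2
    omega
  · intro a b hab
    have hab' := congrArg Subtype.val hab
    simp only at hab'
    have ha := eq_cons_of_getVert_one (hnil a) ((hs a.1 a.2).1) huv
    have hb := eq_cons_of_getVert_one (hnil b) ((hs b.1 b.2).1) huv
    have : a.1.1 = b.1.1 := by rw [ha, hb, hab']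
    exact Subtype.ext (Subtype.ext this)

lemma real_sum_bound {p : ℝ} {d k : ℕ} (hp0 : 0 < p) (hd : 1 ≤ (d:ℝ))
    (hpd : 2 ≤ p * d) (hk : 4 ≤ k) :
    ∑ ℓ ∈ Finset.Icc 3 k, (d:ℝ) ^ (ℓ - 2) * p ^ (ℓ - 1) ≤ 2 * (p * d) ^ (k - 1) / d := by
  set x : ℝ := p * d with hx
  have hx0 : 0 ≤ x := by positivity
  have hd0 : (0:ℝ) < d := lt_of_lt_of_le one_pos hd
  have hterm : ∀ ℓ ∈ Finset.Icc 3 k, (d:ℝ) ^ (ℓ - 2) * p ^ (ℓ - 1) = x ^ (ℓ - 1) / d := by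
    intro ℓ hℓ
    rw [Finset.mem_Icc] at hℓ
    have h1 : ℓ - 1 = (ℓ - 2) + 1 := by omega
    rw [hx, mul_pow, h1, pow_succ (d:ℝ), pow_succ p]
    field_simp
  rw [Finset.sum_congr rfl hterm, ← Finset.sum_div]
  have hsum : ∑ ℓ ∈ Finset.Icc 3 k, x ^ (ℓ - 1) ≤ 2 * x ^ (k - 1) := by
    have himg : ∑ ℓ ∈ Finset.Icc 3 k, x ^ (ℓ - 1)
        = ∑ j ∈ (Finset.Icc 3 k).image (· - 1), x ^ j := by
      rw [Finset.sum_image]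
      intro a ha b hb hab
      rw [Finset.mem_coe, Finset.mem_Icc] at ha hb
      simp only at hab
      omega
    rw [himg]
    have hsub : ∑ j ∈ (Finset.Icc 3 k).image (· - 1), x ^ j ≤ ∑ j ∈ Finset.range k, x ^ j := by
      refine Finset.sum_le_sum_of_subset_of_nonneg ?_ (fun j _ _ => by positivity)
      intro j hj
      simp only [Finset.mem_image, Finset.mem_Icc] at hj
      obtain ⟨ℓ, ⟨h3, hℓk⟩, rfl⟩ := hj
      rw [Finset.mem_range]
      omega
    refine hsub.trans ?_
    have hk1 : k = (k - 1) + 1 := by omega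
    rw [hk1, Finset.sum_range_succ, ← hk1]
    have hgeom : (∑ j ∈ Finset.range (k - 1), x ^ j) * (x - 1) = x ^ (k - 1) - 1 :=
      geom_sum_mul x (k - 1)
    have hS0 : 0 ≤ ∑ j ∈ Finset.range (k - 1), x ^ j :=
      Finset.sum_nonneg fun j _ => by positivity
    have hle : ∑ j ∈ Finset.range (k - 1), x ^ j ≤ x ^ (k - 1) := by
      nlinarith
    nlinarith
  calc (∑ ℓ ∈ Finset.Icc 3 k, x ^ (ℓ - 1)) / d ≤ 2 * x ^ (k - 1) / d := by
        gcongr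
    _ = 2 * (p * d) ^ (k - 1) / d := rfl

end Auxiliary

/-- in a bipartite graph of maximum degree at most `d`, after keeping each
edge independently with probability `p` (where `p·d ≥ 2`), the conditional probability
that a fixed surviving edge `(u,v)` lies on a simple cycle of length at most `k ≥ 4`
is at most `2(pd)^(k-1)/d`. -/
theorem edge_in_short_cycle_prob {V : Type} [Fintype V] [DecidableEq V]
    (G : SimpleGraph V) (side : V → Bool)
    (hbip : ∀ x y : V, G.Adj x y → side x ≠ side y)
    (d : ℕ) (hdeg : ∀ w : V, (G.neighborSet w).ncard ≤ d)
    (p : ℝ) (hp0 : 0 < p) (hp1 : p ≤ 1) (hpd : 2 ≤ p * d)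
    (u v : V) (huv : G.Adj u v) (k : ℕ) (hk : 4 ≤ k) :
    ProbabilityTheory.cond (bernoulliProd (Sym2 V) p) {ω | (keepG G ω).Adj u v}
      {ω | ∃ (w : V) (c : (keepG G ω).Walk w w),
          c.IsCycle ∧ c.length ≤ k ∧ s(u, v) ∈ c.edges}
      ≤ ENNReal.ofReal (2 * (p * d) ^ (k - 1) / d) := by
  classical
  set μ := bernoulliProd (Sym2 V) p with hμdef
  set q := ENNReal.ofReal p with hqdef
  have hq0 : q ≠ 0 := by
    rw [hqdef]; exact ne_of_gt (ENNReal.ofReal_pos.mpr hp0)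
  have hqtop : q ≠ ⊤ := ENNReal.ofReal_ne_top
  -- degree facts
  have hdeg' : ∀ w : V, G.degree w ≤ d := by
    intro w
    have h1 : G.degree w = (G.neighborSet w).ncard := by
      rw [← SimpleGraph.card_neighborFinset_eq_degree, ← Set.ncard_coe_finset]
      congr 1
      ext x
      simp [SimpleGraph.mem_neighborFinset]
    rw [h1]; exact hdeg w
  have hd1 : 1 ≤ d := by
    have h2 : 0 < (G.neighborSet u).ncard :=
      (Set.ncard_pos (Set.toFinite _)).mpr ⟨v, huv⟩
    have := hdeg u
    omega
  -- the conditioning event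
  set Sev : Set (Sym2 V → Bool) := {ω | (keepG G ω).Adj u v} with hSev
  have hSeq : Sev = {ω : Sym2 V → Bool | ∀ e ∈ ({s(u,v)} : Finset (Sym2 V)), ω e = true} := by
    ext ω
    simp only [hSev, Set.mem_setOf_eq, Finset.mem_singleton, forall_eq]
    constructor
    · exact fun h => (show G.Adj u v ∧ _ from h).2
    · exact fun h => show G.Adj u v ∧ _ from ⟨huv, h⟩
  have hSmeas : MeasurableSet Sev := by
    have : Sev = (fun ω : Sym2 V → Bool => ω s(u,v)) ⁻¹' {true} := by
      rw [hSeq]; ext ω; simp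
    rw [this]
    exact measurable_pi_apply s(u,v) (measurableSet_singleton true)
  have hμS : μ Sev = q := by
    rw [hSeq, hμdef, bernoulliProd_cylinder hp1]
    simp [hqdef]
  -- the union bound setup
  set A : G.Walk u u → Set (Sym2 V → Bool) := fun c => {ω | ∀ e ∈ c.edges, ω e = true} with hA
  set 𝒞 : Finset {c : G.Walk u u // c.length < k + 1} :=
    Finset.univ.filter (fun c => c.1.IsTrail ∧ 3 ≤ c.1.length ∧ c.1.getVert 1 = v) with h𝒞
  have hincl : Sev ∩ {ω | ∃ (w : V) (c : (keepG G ω).Walk w w),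
      c.IsCycle ∧ c.length ≤ k ∧ s(u, v) ∈ c.edges} ⊆ ⋃ c ∈ 𝒞, A c.1 := by
    rintro ω ⟨-, w, c, hc, hlen, he⟩
    have hle : keepG G ω ≤ G := fun a b hab => (show G.Adj a b ∧ _ from hab).1
    obtain ⟨c', ht, h3, hlk, hgv, hsub⟩ := exists_normalized_cycle hle c hc hlen he
    refine Set.mem_iUnion₂.mpr ⟨⟨c', by omega⟩, ?_, ?_⟩
    · rw [h𝒞, Finset.mem_filter]
      exact ⟨Finset.mem_univ _, ht, h3, hgv⟩
    · intro e hee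
      have heH : e ∈ (keepG G ω).edgeSet := c.edges_subset_edgeSet (hsub e hee)
      induction e with
      | _ a b => exact (show G.Adj _ _ ∧ _ from heH).2
  -- measure of each cylinder event
  have hAc : ∀ c ∈ 𝒞, μ (A c.1) = q ^ c.1.length := by
    intro c hcmem
    rw [h𝒞, Finset.mem_filter] at hcmem
    obtain ⟨-, ht, -, -⟩ := hcmem
    have hset : A c.1 = {ω : Sym2 V → Bool | ∀ e ∈ c.1.edges.toFinset, ω e = true} := by
      ext ω; simp [hA, List.mem_toFinset]
    rw [hset, hμdef, bernoulliProd_cylinder hp1,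
      List.toFinset_card_of_nodup ht.edges_nodup, SimpleGraph.Walk.length_edges, hqdef]
  -- main chain
  rw [ProbabilityTheory.cond_apply hSmeas, hμS]
  have step1 : μ (Sev ∩ {ω | ∃ (w : V) (c : (keepG G ω).Walk w w),
      c.IsCycle ∧ c.length ≤ k ∧ s(u, v) ∈ c.edges}) ≤ ∑ c ∈ 𝒞, q ^ c.1.length := by
    refine (measure_mono hincl).trans ?_
    refine (measure_biUnion_finset_le 𝒞 _).trans ?_
    exact le_of_eq (Finset.sum_congr rfl hAc)
  have hmaps : ∀ c ∈ 𝒞, c.1.length ∈ Finset.Icc 3 k := by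
    intro c hcmem
    rw [h𝒞, Finset.mem_filter] at hcmem
    have := c.2
    rw [Finset.mem_Icc]
    exact ⟨hcmem.2.2.1, by omega⟩
  have step2 : (∑ c ∈ 𝒞, q ^ c.1.length)
      = ∑ ℓ ∈ Finset.Icc 3 k, ∑ c ∈ 𝒞.filter (fun c => c.1.length = ℓ), q ^ c.1.length :=
    (Finset.sum_fiberwise_of_maps_to hmaps _).symm
  have step3 : ∀ ℓ ∈ Finset.Icc 3 k,
      (∑ c ∈ 𝒞.filter (fun c => c.1.length = ℓ), q ^ c.1.length)
        ≤ ((d : ENNReal)) ^ (ℓ - 2) * q ^ ℓ := by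
    intro ℓ hℓ
    rw [Finset.mem_Icc] at hℓ
    have hcongr : ∀ c ∈ 𝒞.filter (fun c => c.1.length = ℓ), q ^ c.1.length = q ^ ℓ := by
      intro c hc
      rw [Finset.mem_filter] at hc
      rw [hc.2]
    rw [Finset.sum_congr rfl hcongr, Finset.sum_const, nsmul_eq_mul]
    have hcard : (𝒞.filter (fun c => c.1.length = ℓ)).card ≤ d ^ (ℓ - 2) := by
      have hinj := card_cycles_le huv hℓ.1 (𝒞.filter (fun c => c.1.length = ℓ)) ?_
      · refine hinj.trans ?_
        have h21 : ℓ - 1 = (ℓ - 2) + 1 := by omega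
        rw [h21]
        exact card_walk_le hdeg' (ℓ - 2) v u
      · intro c hc
        rw [Finset.mem_filter, h𝒞, Finset.mem_filter] at hc
        exact ⟨hc.1.2.2.2, hc.2⟩
    calc ((𝒞.filter (fun c => c.1.length = ℓ)).card : ENNReal) * q ^ ℓ
        ≤ ((d ^ (ℓ - 2) : ℕ) : ENNReal) * q ^ ℓ := by
          exact mul_le_mul_left (Nat.cast_le.mpr hcard) _
      _ = ((d : ENNReal)) ^ (ℓ - 2) * q ^ ℓ := by rw [Nat.cast_pow]
  have hqpow : ∀ m : ℕ, 1 ≤ m → q⁻¹ * q ^ m = q ^ (m - 1) := by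
    intro m hm
    obtain ⟨n, rfl⟩ : ∃ n, m = n + 1 := ⟨m - 1, by omega⟩
    rw [pow_succ' q n, ← mul_assoc, ENNReal.inv_mul_cancel hq0 hqtop, one_mul]
    simp
  have step4 : q⁻¹ * ∑ ℓ ∈ Finset.Icc 3 k, ((d : ENNReal)) ^ (ℓ - 2) * q ^ ℓ
      = ∑ ℓ ∈ Finset.Icc 3 k, ((d : ENNReal)) ^ (ℓ - 2) * q ^ (ℓ - 1) := by
    rw [Finset.mul_sum]
    refine Finset.sum_congr rfl fun ℓ hℓ => ?_
    rw [Finset.mem_Icc] at hℓ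
    rw [mul_left_comm, hqpow ℓ (by omega)]
  have step5 : (∑ ℓ ∈ Finset.Icc 3 k, ((d : ENNReal)) ^ (ℓ - 2) * q ^ (ℓ - 1))
      = ENNReal.ofReal (∑ ℓ ∈ Finset.Icc 3 k, (d : ℝ) ^ (ℓ - 2) * p ^ (ℓ - 1)) := by
    rw [ENNReal.ofReal_sum_of_nonneg (fun ℓ _ => by positivity)]
    refine Finset.sum_congr rfl fun ℓ _ => ?_
    rw [ENNReal.ofReal_mul (by positivity), ENNReal.ofReal_pow (by positivity),
      ENNReal.ofReal_pow hp0.le, ENNReal.ofReal_natCast, hqdef]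
  have hdR : (1:ℝ) ≤ (d:ℝ) := by exact_mod_cast hd1
  calc q⁻¹ * μ (Sev ∩ {ω | ∃ (w : V) (c : (keepG G ω).Walk w w),
          c.IsCycle ∧ c.length ≤ k ∧ s(u, v) ∈ c.edges})
      ≤ q⁻¹ * ∑ c ∈ 𝒞, q ^ c.1.length := mul_le_mul_right step1 _
    _ = q⁻¹ * ∑ ℓ ∈ Finset.Icc 3 k, ∑ c ∈ 𝒞.filter (fun c => c.1.length = ℓ),
          q ^ c.1.length := by rw [step2]
    _ ≤ q⁻¹ * ∑ ℓ ∈ Finset.Icc 3 k, ((d : ENNReal)) ^ (ℓ - 2) * q ^ ℓ :=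
        mul_le_mul_right (Finset.sum_le_sum step3) _
    _ = ∑ ℓ ∈ Finset.Icc 3 k, ((d : ENNReal)) ^ (ℓ - 2) * q ^ (ℓ - 1) := step4
    _ = ENNReal.ofReal (∑ ℓ ∈ Finset.Icc 3 k, (d : ℝ) ^ (ℓ - 2) * p ^ (ℓ - 1)) := step5
    _ ≤ ENNReal.ofReal (2 * (p * d) ^ (k - 1) / d) :=
        ENNReal.ofReal_le_ofReal (real_sum_bound hp0 hdR hpd hk)
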